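/- The map p ↦ Λ(p) is a bijection from the set of prime ideals of R disjoint from S (equivalently, the prime spectrum of the localization S⁻¹R) onto the set of nonempty irreducible closed subsets of Spec_S R with respect to the S-flat topology. Moreover, under this bijection, a prime ideal p disjoint from S is maximal among the prime ideals disjoint from S (equivalently, corresponds to a maximal ideal of S⁻¹R) if and only if Λ(p) is an irreducible component of Spec_S R with respect to the S-flat topology. -/

import Mathlib

/-- An ideal `P` is `S`-prime if `P ∩ S = ∅` and there is `s ∈ S` such that
whenever `a * b ∈ P`, either `s * a ∈ P` or `s * b ∈ P`. -/
def IsSPrime {R : Type*} [CommRing R] (S : Set R) (P : Ideal R) : Prop :=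
  (P : Set R) ∩ S = ∅ ∧ ∃ s ∈ S, ∀ a b : R, a * b ∈ P → s * a ∈ P ∨ s * b ∈ P

/-- The `S`-prime spectrum `Spec_S R`: the set of all `S`-prime ideals of `R`. -/
def SSpec {R : Type*} [CommRing R] (S : Set R) : Type _ :=
  {P : Ideal R // IsSPrime S P}

/-- The `S`-variety of an ideal `I`:
`V_S(I) = {P ∈ Spec_S R | s • I ⊆ P for some s ∈ S}`. -/
def SVar {R : Type*} [CommRing R] (S : Set R) (I : Ideal R) : Set (SSpec S) :=
  {P | ∃ s ∈ S, ∀ x ∈ I, s * x ∈ P.1}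

/-- The `S`-radical of an ideal `I`:
`√[S](I) = {a ∈ R | s * a ^ n ∈ I for some s ∈ S, n ∈ ℕ}`. -/
def SRad {R : Type*} [CommRing R] (S : Set R) (I : Ideal R) : Set R :=
  {a | ∃ s ∈ S, ∃ n : ℕ, s * a ^ n ∈ I}

/-- The `S`-Zariski topology on `Spec_S R`: the closed sets are exactly the `V_S(I)`. -/
def sZariskiTop {R : Type*} [CommRing R] (S : Set R) : TopologicalSpace (SSpec S) :=
  TopologicalSpace.generateFrom {U | ∃ I : Ideal R, U = (SVar S I)ᶜ}

/-- The `S`-flat topology on `Spec_S R`: the coarsest topology in which every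
`V_S(f)`, `f ∈ R`, is open. -/
def sFlatTop {R : Type*} [CommRing R] (S : Set R) : TopologicalSpace (SSpec S) :=
  TopologicalSpace.generateFrom {U | ∃ f : R, U = SVar S (Ideal.span {f})}

/-- An ideal `I` is `S`-radically finite if `√[S](I) = √[S](J)` for some finitely
generated ideal `J`. -/
def SRadFinite {R : Type*} [CommRing R] (S : Set R) (I : Ideal R) : Prop :=
  ∃ J : Ideal R, J.FG ∧ SRad S I = SRad S J

set_option linter.unusedVariables false
set_option linter.unusedSectionVars false
set_option linter.unnecessarySimpa false

section Aux
variable {R : Type*} [CommRing R] {S : Set R}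
  (hS1 : (1 : R) ∈ S) (hSmul : ∀ s ∈ S, ∀ t ∈ S, s * t ∈ S)
include hS1 hSmul

/-- The `S`-saturation of an ideal. -/
def satS (P : Ideal R) : Ideal R where
  carrier := {a | ∃ t ∈ S, t * a ∈ P}
  zero_mem' := ⟨1, hS1, by simpa using P.zero_mem⟩
  add_mem' := by
    rintro a b ⟨t, ht, hta⟩ ⟨u, hu, hub⟩
    refine ⟨t * u, hSmul t ht u hu, ?_⟩
    have h : t * u * (a + b) = u * (t * a) + t * (u * b) := by ring
    rw [h]
    exact P.add_mem (P.mul_mem_left _ hta) (P.mul_mem_left _ hub)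
  smul_mem' := by
    rintro c a ⟨t, ht, hta⟩
    refine ⟨t, ht, ?_⟩
    have h : t * (c • a) = c * (t * a) := by simp [smul_eq_mul]; ring
    rw [h]; exact P.mul_mem_left _ hta

lemma mem_satS {P : Ideal R} {a : R} : a ∈ satS hS1 hSmul P ↔ ∃ t ∈ S, t * a ∈ P :=
  Iff.rfl

lemma le_satS (P : Ideal R) : P ≤ satS hS1 hSmul P :=
  fun a ha => ⟨1, hS1, by simpa using ha⟩

lemma satS_not_mem_S (P : SSpec S) : ∀ u ∈ S, u ∉ satS hS1 hSmul P.1 := by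
  rintro u hu ⟨t, ht, htu⟩
  exact Set.eq_empty_iff_forall_notMem.mp P.2.1 (t * u) ⟨htu, hSmul t ht u hu⟩

lemma satS_isPrime (P : SSpec S) : (satS hS1 hSmul P.1).IsPrime := by
  constructor
  · intro h
    have h1 : (1 : R) ∈ satS hS1 hSmul P.1 := h ▸ Submodule.mem_top
    obtain ⟨t, ht, htP⟩ := h1
    exact Set.eq_empty_iff_forall_notMem.mp P.2.1 t ⟨by simpa using htP, ht⟩
  · rintro a b ⟨t, ht, htab⟩
    obtain ⟨s, hs, hsP⟩ := P.2.2
    have h : (t * a) * b ∈ P.1 := by rw [show (t*a)*b = t*(a*b) by ring]; exact htab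
    rcases hsP _ _ h with h' | h'
    · exact Or.inl ⟨s * t, hSmul s hs t ht, by rwa [show s*t*a = s*(t*a) by ring]⟩
    · exact Or.inr ⟨s, hs, h'⟩

lemma satS_eq_self {p : Ideal R} (hp : p.IsPrime) (hd : (p : Set R) ∩ S = ∅) :
    satS hS1 hSmul p = p := by
  refine le_antisymm ?_ (le_satS hS1 hSmul p)
  rintro a ⟨t, ht, hta⟩
  rcases hp.mem_or_mem hta with h | h
  · exact absurd (Set.eq_empty_iff_forall_notMem.mp hd t ⟨h, ht⟩) not_false
  · exact h

lemma isSPrime_of_prime {p : Ideal R} (hp : p.IsPrime) (hd : (p : Set R) ∩ S = ∅) :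
    IsSPrime S p :=
  ⟨hd, 1, hS1, fun a b hab => by
    simpa [one_mul] using hp.mem_or_mem hab⟩

lemma mem_SVar_iff {f : R} {P : SSpec S} :
    P ∈ SVar S (Ideal.span {f}) ↔ f ∈ satS hS1 hSmul P.1 := by
  constructor
  · rintro ⟨s, hs, h⟩
    exact ⟨s, hs, h f (Ideal.subset_span rfl)⟩
  · rintro ⟨t, ht, htf⟩
    refine ⟨t, ht, fun x hx => ?_⟩
    obtain ⟨c, rfl⟩ := Ideal.mem_span_singleton'.mp hx
    rw [show t * (c * f) = c * (t * f) by ring]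
    exact P.1.mul_mem_left _ htf

lemma isOpen_SVar (f : R) : @IsOpen _ (sFlatTop S) (SVar S (Ideal.span {f})) :=
  TopologicalSpace.GenerateOpen.basic _ ⟨f, rfl⟩

lemma closure_singleton_flat (P : SSpec S) :
    @closure _ (sFlatTop S) {P} = {Q | satS hS1 hSmul Q.1 ≤ satS hS1 hSmul P.1} := by
  letI := sFlatTop S
  ext Q
  rw [mem_closure_iff]
  constructor
  · intro h f hf
    have hQ : Q ∈ SVar S (Ideal.span {f}) := (mem_SVar_iff hS1 hSmul).mpr hf
    obtain ⟨P', hP', hP'2⟩ := h _ (isOpen_SVar hS1 hSmul f) hQ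
    rw [Set.mem_singleton_iff.mp hP'2] at hP'
    exact (mem_SVar_iff hS1 hSmul).mp hP'
  · intro h o ho hQo
    refine ⟨P, ?_, rfl⟩
    have ho' : TopologicalSpace.GenerateOpen {U | ∃ f : R, U = SVar S (Ideal.span {f})} o := ho
    clear ho
    induction ho' with
    | basic u hu =>
      obtain ⟨f, rfl⟩ := hu
      exact (mem_SVar_iff hS1 hSmul).mpr (h ((mem_SVar_iff hS1 hSmul).mp hQo))
    | univ => trivial
    | inter u v _ _ ihu ihv => exact ⟨ihu hQo.1, ihv hQo.2⟩
    | sUnion ts _ ih =>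
      obtain ⟨u, hu, hQu⟩ := hQo
      exact ⟨u, hu, ih u hu hQu⟩

lemma exists_generic (F : Set (SSpec S))
    (hirr : @IsIrreducible _ (sFlatTop S) F) (hcl : @IsClosed _ (sFlatTop S) F) :
    ∃ P : SSpec S, P.1.IsPrime ∧ F = @closure _ (sFlatTop S) {P} := by
  letI := sFlatTop S
  obtain ⟨Q0, hQ0⟩ := hirr.1
  have hdir : ∀ f g : R, (∃ Q ∈ F, f ∈ satS hS1 hSmul Q.1) →
      (∃ Q ∈ F, g ∈ satS hS1 hSmul Q.1) →
      ∃ Q ∈ F, f ∈ satS hS1 hSmul Q.1 ∧ g ∈ satS hS1 hSmul Q.1 := by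
    rintro f g ⟨Qf, hQf, hf⟩ ⟨Qg, hQg, hg⟩
    obtain ⟨Q, hQF, hQu, hQv⟩ := hirr.2 _ _ (isOpen_SVar hS1 hSmul f) (isOpen_SVar hS1 hSmul g)
      ⟨Qf, hQf, (mem_SVar_iff hS1 hSmul).mpr hf⟩ ⟨Qg, hQg, (mem_SVar_iff hS1 hSmul).mpr hg⟩
    exact ⟨Q, hQF, (mem_SVar_iff hS1 hSmul).mp hQu, (mem_SVar_iff hS1 hSmul).mp hQv⟩
  let pc : Ideal R :=
  { carrier := {f | ∃ Q ∈ F, f ∈ satS hS1 hSmul Q.1}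
    zero_mem' := ⟨Q0, hQ0, (satS hS1 hSmul Q0.1).zero_mem⟩
    add_mem' := by
      rintro a b ha hb
      obtain ⟨Q, hQF, ha', hb'⟩ := hdir a b ha hb
      exact ⟨Q, hQF, (satS hS1 hSmul Q.1).add_mem ha' hb'⟩
    smul_mem' := by
      rintro c a ⟨Q, hQF, ha⟩
      exact ⟨Q, hQF, (satS hS1 hSmul Q.1).smul_mem c ha⟩ }
  have hpc_mem : ∀ f : R, f ∈ pc ↔ ∃ Q ∈ F, f ∈ satS hS1 hSmul Q.1 := fun f => Iff.rfl
  have hdisj : (pc : Set R) ∩ S = ∅ := by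
    rw [Set.eq_empty_iff_forall_notMem]
    rintro u ⟨⟨Q, hQF, hu⟩, huS⟩
    exact satS_not_mem_S hS1 hSmul Q u huS hu
  have hprime : pc.IsPrime := by
    constructor
    · intro h
      have h1 : (1 : R) ∈ pc := h ▸ Submodule.mem_top
      obtain ⟨Q, hQF, h1⟩ := h1
      exact (satS_isPrime hS1 hSmul Q).ne_top (Ideal.eq_top_of_isUnit_mem _ h1 isUnit_one)
    · rintro a b ⟨Q, hQF, hab⟩
      rcases (satS_isPrime hS1 hSmul Q).mem_or_mem hab with h | h
      · exact Or.inl ⟨Q, hQF, h⟩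
      · exact Or.inr ⟨Q, hQF, h⟩
  let P : SSpec S := ⟨pc, isSPrime_of_prime hS1 hSmul hprime hdisj⟩
  have hsatP : satS hS1 hSmul P.1 = pc := satS_eq_self hS1 hSmul hprime hdisj
  have hPF : P ∈ F := by
    by_contra hPF
    have hopen : IsOpen Fᶜ := hcl.isOpen_compl
    have hB := TopologicalSpace.isTopologicalBasis_of_subbasis
      (rfl : sFlatTop S = TopologicalSpace.generateFrom _)
    obtain ⟨v, ⟨T, ⟨hTfin, hTsub⟩, rfl⟩, hPv, hvF⟩ :=
      hB.exists_subset_of_mem_open (Set.mem_compl hPF) hopen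
    have key : ∀ T' : Set (Set (SSpec S)), T'.Finite →
        T' ⊆ {U | ∃ f : R, U = SVar S (Ideal.span {f})} → P ∈ ⋂₀ T' →
        (F ∩ ⋂₀ T').Nonempty := by
      intro T' hfin
      refine Set.Finite.induction_on (motive := fun T' _ => T' ⊆ {U | ∃ f : R, U = SVar S (Ideal.span {f})} → P ∈ ⋂₀ T' →
          (F ∩ ⋂₀ T').Nonempty) T' hfin (fun _ _ => by simpa using ⟨Q0, hQ0⟩)
        (@fun u T'' hu hfin ih hsub hPmem => ?_)
      rw [Set.sInter_insert] at hPmem ⊢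
      obtain ⟨f, rfl⟩ := hsub (Set.mem_insert _ _)
      have huF : (F ∩ SVar S (Ideal.span {f})).Nonempty := by
        have hf : f ∈ pc := hsatP ▸ (mem_SVar_iff hS1 hSmul).mp hPmem.1
        obtain ⟨Q, hQF, hfQ⟩ := hf
        exact ⟨Q, hQF, (mem_SVar_iff hS1 hSmul).mpr hfQ⟩
      have hTF : (F ∩ ⋂₀ T'').Nonempty :=
        ih (fun t ht => hsub (Set.mem_insert_of_mem _ ht)) hPmem.2
      have hTopen : IsOpen (⋂₀ T'') := by
        refine hfin.isOpen_sInter fun t ht => ?_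
        obtain ⟨g, rfl⟩ := hsub (Set.mem_insert_of_mem _ ht)
        exact isOpen_SVar hS1 hSmul g
      exact hirr.2 _ _ (isOpen_SVar hS1 hSmul f) hTopen huF hTF
    obtain ⟨Q, hQF, hQT⟩ := key T hTfin hTsub hPv
    exact hvF hQT hQF
  refine ⟨P, hprime, ?_⟩
  rw [closure_singleton_flat hS1 hSmul, hsatP]
  apply Set.Subset.antisymm
  · intro Q hQ f hf
    exact ⟨Q, hQ, hf⟩
  · intro Q hQ
    have hQc : Q ∈ closure {P} := by
      rw [closure_singleton_flat hS1 hSmul, hsatP]; exact hQ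
    exact closure_minimal (Set.singleton_subset_iff.mpr hPF) hcl hQc

end Aux

/-- The map `p ↦ Λ(p)` is a bijection from the set of prime ideals of `R` disjoint
from `S` onto the set of (nonempty) irreducible closed subsets of `Spec_S R` for the
`S`-flat topology; under this bijection, `p` is maximal among primes disjoint from `S`
iff `Λ(p)` is an irreducible component of `Spec_S R` for the `S`-flat topology. -/
theorem sFlat_irreducible_closed_bijection {R : Type*} [CommRing R] [Nontrivial R]
    (S : Set R)
    (hS0 : (0 : R) ∉ S) (hS1 : (1 : R) ∈ S) (hSmul : ∀ s ∈ S, ∀ t ∈ S, s * t ∈ S) :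
    (Function.Injective fun p : {p : SSpec S // p.1.IsPrime} =>
        @closure (SSpec S) (sFlatTop S) {p.1}) ∧
    (∀ F : Set (SSpec S),
        (@IsIrreducible (SSpec S) (sFlatTop S) F ∧ @IsClosed (SSpec S) (sFlatTop S) F) ↔
          ∃ p : {p : SSpec S // p.1.IsPrime},
            F = @closure (SSpec S) (sFlatTop S) {p.1}) ∧
    (∀ p : {p : SSpec S // p.1.IsPrime},
        (∀ Q : Ideal R, Q.IsPrime → (Q : Set R) ∩ S = ∅ → p.1.1 ≤ Q → p.1.1 = Q) ↔
          @closure (SSpec S) (sFlatTop S) {p.1} ∈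
            @irreducibleComponents (SSpec S) (sFlatTop S)) := by
  letI := sFlatTop S
  -- saturation of a prime point is itself
  have hsat : ∀ p : {p : SSpec S // p.1.IsPrime}, satS hS1 hSmul p.1.1 = p.1.1 :=
    fun p => satS_eq_self hS1 hSmul p.2 p.1.2.1
  -- membership in the closure of a prime point
  have hmem : ∀ (p : {p : SSpec S // p.1.IsPrime}) (Q : SSpec S),
      Q ∈ @closure (SSpec S) (sFlatTop S) {p.1} ↔ satS hS1 hSmul Q.1 ≤ p.1.1 := by
    intro p Q
    rw [closure_singleton_flat hS1 hSmul, hsat p]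
    exact Iff.rfl
  have hle : ∀ p q : {p : SSpec S // p.1.IsPrime},
      @closure (SSpec S) (sFlatTop S) {p.1} ⊆ @closure (SSpec S) (sFlatTop S) {q.1} →
      p.1.1 ≤ q.1.1 := by
    intro p q h
    have hp : p.1 ∈ @closure (SSpec S) (sFlatTop S) {q.1} := h (subset_closure rfl)
    rw [hmem q p.1, hsat p] at hp
    exact hp
  have hinj : Function.Injective fun p : {p : SSpec S // p.1.IsPrime} =>
      @closure (SSpec S) (sFlatTop S) {p.1} := by
    intro p q h
    exact Subtype.ext (Subtype.ext (le_antisymm (hle p q h.le) (hle q p h.ge)))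
  have hbij : ∀ F : Set (SSpec S),
      (@IsIrreducible (SSpec S) (sFlatTop S) F ∧ @IsClosed (SSpec S) (sFlatTop S) F) ↔
        ∃ p : {p : SSpec S // p.1.IsPrime},
          F = @closure (SSpec S) (sFlatTop S) {p.1} := by
    intro F
    constructor
    · rintro ⟨hirr, hcl⟩
      obtain ⟨P, hP, hF⟩ := exists_generic hS1 hSmul F hirr hcl
      exact ⟨⟨P, hP⟩, hF⟩
    · rintro ⟨p, rfl⟩
      exact ⟨isIrreducible_singleton.closure, isClosed_closure⟩
  refine ⟨hinj, hbij, fun p => ?_⟩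
  constructor
  · intro hmax
    constructor
    · exact isIrreducible_singleton.closure
    · intro t ht hsub
      have htc : @IsIrreducible (SSpec S) (sFlatTop S) (closure t) ∧
          @IsClosed (SSpec S) (sFlatTop S) (closure t) := ⟨ht.closure, isClosed_closure⟩
      obtain ⟨q, hq⟩ := (hbij (closure t)).mp htc
      have hpq : p.1.1 ≤ q.1.1 :=
        hle p q (hq ▸ (hsub.trans subset_closure))
      have heq : p.1.1 = q.1.1 := hmax q.1.1 q.2 q.1.2.1 hpq
      have : q.1 = p.1 := Subtype.ext heq.symm
      calc t ⊆ closure t := subset_closure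
        _ = @closure (SSpec S) (sFlatTop S) {q.1} := hq
        _ = @closure (SSpec S) (sFlatTop S) {p.1} := by rw [this]
  · intro hcomp Q hQ hQd hpQ
    let Qpt : SSpec S := ⟨Q, isSPrime_of_prime hS1 hSmul hQ hQd⟩
    have hQpt : (⟨Qpt, hQ⟩ : {p : SSpec S // p.1.IsPrime}).1.1 = Q := rfl
    have hsub : @closure (SSpec S) (sFlatTop S) {p.1} ⊆
        @closure (SSpec S) (sFlatTop S) {Qpt} := by
      intro x hx
      rw [hmem p x] at hx
      rw [hmem ⟨Qpt, hQ⟩ x]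
      exact hx.trans hpQ
    have hQirr : @IsIrreducible (SSpec S) (sFlatTop S)
        (@closure (SSpec S) (sFlatTop S) {Qpt}) :=
      (isIrreducible_singleton (x := Qpt)).closure
    have h2 := hcomp.2 hQirr hsub
    have hQp : Qpt ∈ @closure (SSpec S) (sFlatTop S) {p.1} :=
      h2 (subset_closure rfl)
    rw [hmem p Qpt] at hQp
    have : Q ≤ p.1.1 := by
      have := satS_eq_self hS1 hSmul hQ hQd ▸ hQp
      exact this
    exact le_antisymm hpQ this
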